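/- Let F be a Borel probability measure on ℝ^q, let g : ℝ^q × ℝ^q → ℝ be a bounded, measurable, symmetric kernel satisfying the variation condition with respect to F with constants L, ε₀ > 0, and let u = E g(X,Y) and g₁(x) = E g(x,X) − u for X, Y independent with law F. Then the degenerate kernel g₂(x,y) = g(x,y) − g₁(x) − g₁(y) − u also satisfies the variation condition with respect to F, with constants 3L and ε₀; that is, for all ε ∈ (0,ε₀): E[ sup_{|(x,y)−(X,Y)|₂ ≤ ε} |g₂(x,y) − g₂(X,Y)| ] ≤ 3Lε. Moreover, the linear part g₁ satisfies E[ sup_{|x−X|₂ ≤ ε} |g₁(x) − g₁(X)| ] ≤ Lε for all ε ∈ (0,ε₀). -/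

import Mathlib

open MeasureTheory

/-- The Euclidean (`ℝ^{2q}`) distance between two points of `ℝ^q × ℝ^q`, where `ℝ^q`
carries the Euclidean norm. -/
noncomputable def pairDist {q : ℕ}
    (w z : EuclideanSpace ℝ (Fin q) × EuclideanSpace ℝ (Fin q)) : ℝ :=
  Real.sqrt (dist w.1 z.1 ^ 2 + dist w.2 z.2 ^ 2)

section Aux

variable {q : ℕ}

lemma pairDist_nonneg (w z : EuclideanSpace ℝ (Fin q) × EuclideanSpace ℝ (Fin q)) :
    0 ≤ pairDist w z := Real.sqrt_nonneg _

lemma pairDist_self (z : EuclideanSpace ℝ (Fin q) × EuclideanSpace ℝ (Fin q)) :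
    pairDist z z = 0 := by
  simp [pairDist]

lemma dist_fst_le_pairDist (w z : EuclideanSpace ℝ (Fin q) × EuclideanSpace ℝ (Fin q)) :
    dist w.1 z.1 ≤ pairDist w z := by
  rw [pairDist]
  calc dist w.1 z.1 = Real.sqrt (dist w.1 z.1 ^ 2) := (Real.sqrt_sq dist_nonneg).symm
  _ ≤ Real.sqrt (dist w.1 z.1 ^ 2 + dist w.2 z.2 ^ 2) :=
      Real.sqrt_le_sqrt (by nlinarith [sq_nonneg (dist w.2 z.2)])

lemma dist_snd_le_pairDist (w z : EuclideanSpace ℝ (Fin q) × EuclideanSpace ℝ (Fin q)) :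
    dist w.2 z.2 ≤ pairDist w z := by
  rw [pairDist]
  calc dist w.2 z.2 = Real.sqrt (dist w.2 z.2 ^ 2) := (Real.sqrt_sq dist_nonneg).symm
  _ ≤ Real.sqrt (dist w.1 z.1 ^ 2 + dist w.2 z.2 ^ 2) :=
      Real.sqrt_le_sqrt (by nlinarith [sq_nonneg (dist w.1 z.1)])

lemma pairDist_mk_left (x' x y : EuclideanSpace ℝ (Fin q)) :
    pairDist (x', y) (x, y) = dist x' x := by
  rw [pairDist]
  simp only [dist_self]
  rw [show (0:ℝ) ^ 2 = 0 by norm_num, add_zero]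
  exact Real.sqrt_sq dist_nonneg

lemma continuous_pairDist (w : EuclideanSpace ℝ (Fin q) × EuclideanSpace ℝ (Fin q)) :
    Continuous fun z => pairDist w z := by
  unfold pairDist
  exact Real.continuous_sqrt.comp
    (((continuous_const.dist continuous_fst).pow 2).add
      ((continuous_const.dist continuous_snd).pow 2))

variable {G : EuclideanSpace ℝ (Fin q) × EuclideanSpace ℝ (Fin q) → ℝ} {B : ℝ}

/-- Open-ball oscillation supremum. -/
noncomputable def So (G : EuclideanSpace ℝ (Fin q) × EuclideanSpace ℝ (Fin q) → ℝ)
    (r : ℝ) (z : EuclideanSpace ℝ (Fin q) × EuclideanSpace ℝ (Fin q)) : ℝ :=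
  ⨆ w : {w : EuclideanSpace ℝ (Fin q) × EuclideanSpace ℝ (Fin q) // pairDist w z < r},
    |G w.1 - G z|

lemma bddAbove_range_abs_sub (hB : ∀ z, |G z| ≤ B)
    (z : EuclideanSpace ℝ (Fin q) × EuclideanSpace ℝ (Fin q))
    (p : EuclideanSpace ℝ (Fin q) × EuclideanSpace ℝ (Fin q) → Prop) :
    BddAbove (Set.range fun w : {w // p w} => |G w.1 - G z|) := by
  refine ⟨2 * B, ?_⟩
  rintro x ⟨w, rfl⟩
  calc |G w.1 - G z| ≤ |G w.1| + |G z| := abs_sub _ _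
  _ ≤ B + B := add_le_add (hB _) (hB _)
  _ = 2 * B := by ring

lemma So_nonneg {r : ℝ} {z : EuclideanSpace ℝ (Fin q) × EuclideanSpace ℝ (Fin q)} :
    0 ≤ So G r z :=
  Real.iSup_nonneg fun _ => abs_nonneg _

lemma le_So (hB : ∀ z, |G z| ≤ B) {r : ℝ}
    {z w : EuclideanSpace ℝ (Fin q) × EuclideanSpace ℝ (Fin q)}
    (hw : pairDist w z < r) : |G w - G z| ≤ So G r z :=
  le_ciSup (bddAbove_range_abs_sub hB z _) (⟨w, hw⟩ : {w // pairDist w z < r})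

lemma So_le (hB : ∀ z, |G z| ≤ B) (hB0 : 0 ≤ B) {r : ℝ}
    {z : EuclideanSpace ℝ (Fin q) × EuclideanSpace ℝ (Fin q)} :
    So G r z ≤ 2 * B := by
  refine Real.iSup_le (fun w => ?_) (by linarith)
  calc |G w.1 - G z| ≤ |G w.1| + |G z| := abs_sub _ _
  _ ≤ B + B := add_le_add (hB _) (hB _)
  _ = 2 * B := by ring

lemma So_mono (hB : ∀ z, |G z| ≤ B) {r r' : ℝ} (h : r ≤ r')
    {z : EuclideanSpace ℝ (Fin q) × EuclideanSpace ℝ (Fin q)} :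
    So G r z ≤ So G r' z :=
  Real.iSup_le (fun w => le_So hB (lt_of_lt_of_le w.2 h)) So_nonneg

lemma measurable_So (hG : Measurable G) (hB : ∀ z, |G z| ≤ B) {r : ℝ} (hr : 0 < r) :
    Measurable (So G r) := by
  apply measurable_of_Ioi
  intro t
  have hopen : ∀ (P : EuclideanSpace ℝ (Fin q) × EuclideanSpace ℝ (Fin q) → Prop),
      IsOpen {z | ∃ w, pairDist w z < r ∧ P w} := by
    intro P
    have heq : {z | ∃ w, pairDist w z < r ∧ P w}
        = ⋃ (w) (_ : P w), {z | pairDist w z < r} := by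
      ext z
      simp only [Set.mem_setOf_eq, Set.mem_iUnion]
      tauto
    rw [heq]
    exact isOpen_iUnion fun w => isOpen_iUnion fun _ =>
      isOpen_Iio.preimage (continuous_pairDist w)
  have hset : So G r ⁻¹' Set.Ioi t =
      ⋃ s : ℚ, ((G ⁻¹' Set.Iio (s : ℝ) ∩ {z | ∃ w, pairDist w z < r ∧ (s : ℝ) + t ≤ G w}) ∪
        (G ⁻¹' Set.Ioi (s : ℝ) ∩ {z | ∃ w, pairDist w z < r ∧ G w ≤ (s : ℝ) - t})) := by
    ext z
    haveI : Nonempty {w // pairDist w z < r} := ⟨⟨z, by rw [pairDist_self]; exact hr⟩⟩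
    simp only [Set.mem_preimage, Set.mem_Ioi, Set.mem_iUnion, Set.mem_union, Set.mem_inter_iff,
      Set.mem_setOf_eq, Set.mem_Iio]
    constructor
    · intro ht
      obtain ⟨⟨w, hw⟩, htw⟩ :=
        (lt_ciSup_iff (bddAbove_range_abs_sub hB z _)).mp ht
      rcases lt_abs.mp htw with h | h
    -- h : t < G w - G z
      · obtain ⟨s, hs1, hs2⟩ := exists_rat_btwn (show G z < G w - t by linarith)
        exact ⟨s, Or.inl ⟨hs1, w, hw, by linarith⟩⟩
    -- h : t < -(G w - G z)
      · obtain ⟨s, hs1, hs2⟩ := exists_rat_btwn (show G w + t < G z by linarith)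
        exact ⟨s, Or.inr ⟨hs2, w, hw, by linarith⟩⟩
    · rintro ⟨s, ⟨hz, w, hw, hws⟩ | ⟨hz, w, hw, hws⟩⟩
      · calc t < G w - G z := by linarith
        _ ≤ |G w - G z| := le_abs_self _
        _ ≤ So G r z := le_So hB hw
      · calc t < G z - G w := by linarith
        _ ≤ |G z - G w| := le_abs_self _
        _ = |G w - G z| := abs_sub_comm _ _
        _ ≤ So G r z := le_So hB hw
  rw [hset]
  exact MeasurableSet.iUnion fun s =>
    ((hG measurableSet_Iio).inter (hopen _).measurableSet).union
      ((hG measurableSet_Ioi).inter (hopen _).measurableSet)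

lemma So_of_nonpos {r : ℝ} (h : r ≤ 0)
    (z : EuclideanSpace ℝ (Fin q) × EuclideanSpace ℝ (Fin q)) : So G r z = 0 := by
  haveI : IsEmpty {w : EuclideanSpace ℝ (Fin q) × EuclideanSpace ℝ (Fin q) //
      pairDist w z < r} :=
    ⟨fun w => (pairDist_nonneg w.1 z).not_gt (w.2.trans_le h)⟩
  exact Real.iSup_of_isEmpty _

lemma integrable_So (hG : Measurable G) (hB : ∀ z, |G z| ≤ B) (hB0 : 0 ≤ B)
    (μ : Measure (EuclideanSpace ℝ (Fin q) × EuclideanSpace ℝ (Fin q)))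
    [IsFiniteMeasure μ] (r : ℝ) : Integrable (So G r) μ := by
  rcases le_or_gt r 0 with h | h
  · have heq : So G r = fun _ => (0 : ℝ) := funext fun z => So_of_nonpos h z
    rw [heq]
    exact integrable_const 0
  · refine Integrable.mono' (integrable_const (2 * B))
      (measurable_So hG hB h).aestronglyMeasurable ?_
    filter_upwards with z
    rw [Real.norm_eq_abs, abs_of_nonneg So_nonneg]
    exact So_le hB hB0

/-- Squeeze helper: if `X ≤ c * s` for all `s` slightly above `ε`, then `X ≤ c * ε`. -/
lemma le_mul_of_forall_lt_aux {X c ε ε₀ : ℝ} (hc : 0 ≤ c) (h0 : ε < ε₀)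
    (h : ∀ s, ε < s → s < ε₀ → X ≤ c * s) : X ≤ c * ε := by
  by_contra hcon
  push_neg at hcon
  rcases hc.eq_or_lt with hc0 | hc'
  · have h1 := h ((ε + ε₀) / 2) (by linarith) (by linarith)
    rw [← hc0] at h1 hcon
    simp at h1
    linarith
  · have hεX : ε < X / c := by
      rw [lt_div_iff₀ hc']
      calc ε * c = c * ε := mul_comm _ _
      _ < X := hcon
    set s := min ((ε + ε₀) / 2) ((ε + X / c) / 2) with hs
    have h1 : ε < s := lt_min (by linarith) (by linarith)
    have h2 : s < ε₀ := (min_le_left _ _).trans_lt (by linarith)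
    have h3 : s < X / c := (min_le_right _ _).trans_lt (by linarith)
    have h4 : X ≤ c * s := h s h1 h2
    have h5 : s * c < X := (lt_div_iff₀ hc').mp h3
    nlinarith

end Aux

/-- If a bounded, measurable, symmetric kernel `g` satisfies the variation
condition with respect to `F` with constants `L, ε₀ > 0`, then the degenerate part `g₂` of
its Hoeffding decomposition satisfies the variation condition with constants `3L, ε₀`, and
the linear part `g₁` satisfies `E[sup_{|x−X|₂ ≤ ε} |g₁(x) − g₁(X)|] ≤ Lε` for `ε ∈ (0,ε₀)`. -/
theorem hoeffding_parts_variation_condition {q : ℕ}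
    (F : Measure (EuclideanSpace ℝ (Fin q))) [IsProbabilityMeasure F]
    (g : EuclideanSpace ℝ (Fin q) → EuclideanSpace ℝ (Fin q) → ℝ)
    (hsymm : ∀ x y, g x y = g y x)
    (hmeas : Measurable (Function.uncurry g))
    (B : ℝ) (hbdd : ∀ x y, |g x y| ≤ B)
    (L ε₀ : ℝ) (hL : 0 < L) (hε₀ : 0 < ε₀)
    (hvar : ∀ ε : ℝ, 0 < ε → ε < ε₀ →
      ∫ z : EuclideanSpace ℝ (Fin q) × EuclideanSpace ℝ (Fin q),
          (⨆ w : {w : EuclideanSpace ℝ (Fin q) × EuclideanSpace ℝ (Fin q) //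
              pairDist w z ≤ ε},
            |g w.1.1 w.1.2 - g z.1 z.2|) ∂(F.prod F)
        ≤ L * ε)
    (u : ℝ)
    (hu : u = ∫ p : EuclideanSpace ℝ (Fin q) × EuclideanSpace ℝ (Fin q),
        g p.1 p.2 ∂(F.prod F))
    (g₁ : EuclideanSpace ℝ (Fin q) → ℝ) (hg₁ : ∀ x, g₁ x = (∫ y, g x y ∂F) - u)
    (g₂ : EuclideanSpace ℝ (Fin q) → EuclideanSpace ℝ (Fin q) → ℝ)
    (hg₂ : ∀ x y, g₂ x y = g x y - g₁ x - g₁ y - u) :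
    (∀ ε : ℝ, 0 < ε → ε < ε₀ →
      ∫ z : EuclideanSpace ℝ (Fin q) × EuclideanSpace ℝ (Fin q),
          (⨆ w : {w : EuclideanSpace ℝ (Fin q) × EuclideanSpace ℝ (Fin q) //
              pairDist w z ≤ ε},
            |g₂ w.1.1 w.1.2 - g₂ z.1 z.2|) ∂(F.prod F)
        ≤ 3 * L * ε)
    ∧ (∀ ε : ℝ, 0 < ε → ε < ε₀ →
      ∫ x : EuclideanSpace ℝ (Fin q),
          (⨆ x' : {x' : EuclideanSpace ℝ (Fin q) // dist x' x ≤ ε}, |g₁ x' - g₁ x|) ∂F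
        ≤ L * ε) := by
  classical
  have hG : Measurable (Function.uncurry g) := hmeas
  have hB : ∀ z : EuclideanSpace ℝ (Fin q) × EuclideanSpace ℝ (Fin q),
      |Function.uncurry g z| ≤ B := fun z => hbdd z.1 z.2
  have hB0 : 0 ≤ B := (abs_nonneg _).trans (hbdd 0 0)
  set ψ : ℝ → ℝ := fun r => ∫ z, So (Function.uncurry g) r z ∂(F.prod F) with hψdef
  have hψmono : Monotone ψ := by
    intro r r' hrr'
    exact integral_mono (integrable_So hG hB hB0 _ r) (integrable_So hG hB hB0 _ r')
      fun z => So_mono hB hrr'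
  -- At continuity points of ψ, the closed-ball sup is a.e. equal to the open-ball sup,
  -- hence integrable, and `hvar` applies.
  have hgood : ∀ s, 0 < s → s < ε₀ → ContinuousAt ψ s → ψ s ≤ L * s := by
    intro s hs0 hsε₀ hcont
    set f : ℕ → EuclideanSpace ℝ (Fin q) × EuclideanSpace ℝ (Fin q) → ℝ :=
      fun n z => So (Function.uncurry g) (s + 1 / (n + 1)) z with hfdef
    have hpos : ∀ n : ℕ, (0 : ℝ) < 1 / ((n : ℝ) + 1) := fun n => by positivity
    have hfmeas : ∀ n, Measurable (f n) := fun n =>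
      measurable_So hG hB (by have := hpos n; linarith)
    have hfanti : ∀ z, Antitone fun n => f n z := by
      intro z n m hnm
      apply So_mono hB
      have h1 : (1 : ℝ) / ((m : ℝ) + 1) ≤ 1 / ((n : ℝ) + 1) := by
        apply one_div_le_one_div_of_le (by positivity)
        have : (n : ℝ) ≤ (m : ℝ) := by exact_mod_cast hnm
        linarith
      linarith
    set T : EuclideanSpace ℝ (Fin q) × EuclideanSpace ℝ (Fin q) → ℝ :=
      fun z => ⨅ n, f n z with hTdef
    have hTtendsto : ∀ z, Filter.Tendsto (fun n => f n z) Filter.atTop (nhds (T z)) := by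
      intro z
      exact tendsto_atTop_ciInf (hfanti z)
        ⟨0, by rintro x ⟨n, rfl⟩; exact So_nonneg⟩
    have hTmeas : Measurable T :=
      measurable_of_tendsto_metrizable hfmeas (tendsto_pi_nhds.mpr hTtendsto)
    have hTnonneg : ∀ z, 0 ≤ T z := fun z => le_ciInf fun n => So_nonneg
    have hTbddBelow : ∀ z, BddBelow (Set.range fun n => f n z) := by
      intro z
      exact ⟨0, by rintro x ⟨n, rfl⟩; exact So_nonneg⟩
    have hTle : ∀ z, T z ≤ 2 * B := fun z =>
      (ciInf_le (hTbddBelow z) 0).trans (So_le hB hB0)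
    have hTint : Integrable T (F.prod F) :=
      Integrable.mono' (integrable_const (2 * B)) hTmeas.aestronglyMeasurable
        (Filter.Eventually.of_forall fun z => by
          rw [Real.norm_eq_abs, abs_of_nonneg (hTnonneg z)]; exact hTle z)
    have htend1 : Filter.Tendsto (fun n => ∫ z, f n z ∂(F.prod F)) Filter.atTop
        (nhds (∫ z, T z ∂(F.prod F))) := by
      refine tendsto_integral_of_dominated_convergence (fun _ => 2 * B)
        (fun n => (hfmeas n).aestronglyMeasurable) (integrable_const _)
        (fun n => Filter.Eventually.of_forall fun z => ?_)
        (Filter.Eventually.of_forall hTtendsto)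
      rw [Real.norm_eq_abs, abs_of_nonneg So_nonneg]
      exact So_le hB hB0
    have htend2 : Filter.Tendsto (fun n => ∫ z, f n z ∂(F.prod F)) Filter.atTop
        (nhds (ψ s)) := by
      have h1 : Filter.Tendsto (fun n : ℕ => s + 1 / ((n : ℝ) + 1)) Filter.atTop (nhds s) := by
        have h2 := tendsto_one_div_add_atTop_nhds_zero_nat (𝕜 := ℝ)
        have h3 := Filter.Tendsto.add (tendsto_const_nhds (x := s) (f := Filter.atTop)) h2
        simpa using h3
      have h4 := (hcont.tendsto).comp h1
      have h5 : (ψ ∘ fun n : ℕ => s + 1 / ((n : ℝ) + 1))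
          = fun n => ∫ z, f n z ∂(F.prod F) := by
        funext n
        simp only [Function.comp, hψdef, hfdef]
      rwa [h5] at h4
    have hint : ∫ z, T z ∂(F.prod F) = ψ s := tendsto_nhds_unique htend1 htend2
    have hSoT : ∀ z, So (Function.uncurry g) s z ≤ T z := fun z =>
      le_ciInf fun n => So_mono hB (by have := hpos n; linarith)
    have hzero : ∫ z, (T z - So (Function.uncurry g) s z) ∂(F.prod F) = 0 := by
      rw [integral_sub hTint (integrable_So hG hB hB0 _ s), hint]
      simp [hψdef]
    have hae : (fun z => T z - So (Function.uncurry g) s z) =ᵐ[F.prod F] 0 :=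
      (integral_eq_zero_iff_of_nonneg (fun z => sub_nonneg.mpr (hSoT z))
        (hTint.sub (integrable_So hG hB hB0 _ s))).mp hzero
    have hScae : (fun z : EuclideanSpace ℝ (Fin q) × EuclideanSpace ℝ (Fin q) =>
        (⨆ w : {w : EuclideanSpace ℝ (Fin q) × EuclideanSpace ℝ (Fin q) //
            pairDist w z ≤ s}, |g w.1.1 w.1.2 - g z.1 z.2|))
        =ᵐ[F.prod F] So (Function.uncurry g) s := by
      filter_upwards [hae] with z hz
      have hz' : T z = So (Function.uncurry g) s z := by
        have : T z - So (Function.uncurry g) s z = 0 := hz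
        linarith
      apply le_antisymm
      · rw [← hz']
        refine Real.iSup_le (fun w => le_ciInf fun n => ?_) (hTnonneg z)
        exact le_So hB (lt_of_le_of_lt w.2 (by have := hpos n; linarith))
      · refine Real.iSup_le (fun w => ?_) (Real.iSup_nonneg fun w => abs_nonneg _)
        exact le_ciSup
          (bddAbove_range_abs_sub hB z (fun w => pairDist w z ≤ s)) ⟨w.1, w.2.le⟩
    have hψs : ψ s = ∫ z, (⨆ w : {w : EuclideanSpace ℝ (Fin q) ×
          EuclideanSpace ℝ (Fin q) // pairDist w z ≤ s},
        |g w.1.1 w.1.2 - g z.1 z.2|) ∂(F.prod F) := by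
      rw [hψdef]
      exact (integral_congr_ae hScae).symm
    rw [hψs]
    exact hvar s hs0 hsε₀
  have hψle : ∀ r, 0 < r → r < ε₀ → ψ r ≤ L * r := by
    intro r hr0 hrε₀
    apply le_mul_of_forall_lt_aux hL.le hrε₀
    intro η hrη hηε₀
    have hbadcount : Set.Countable {x | ¬ContinuousAt ψ x} :=
      hψmono.countable_not_continuousAt
    have hdense : Dense {x | ¬ContinuousAt ψ x}ᶜ := Set.Countable.dense_compl ℝ hbadcount
    obtain ⟨s, hs_mem, hs_io⟩ := hdense.exists_between hrη
    have hgoods : ψ s ≤ L * s :=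
      hgood s (hr0.trans hs_io.1) (hs_io.2.trans hηε₀)
        (not_not.mp hs_mem)
    calc ψ r ≤ ψ s := hψmono hs_io.1.le
    _ ≤ L * s := hgoods
    _ ≤ L * η := by nlinarith [hs_io.2]
  -- Sections of g are integrable.
  have hsec : ∀ x : EuclideanSpace ℝ (Fin q), Measurable (fun y => g x y) :=
    fun x => hmeas.of_uncurry_left
  have hsecint : ∀ x, Integrable (fun y => g x y) F := fun x =>
    Integrable.mono' (integrable_const B) (hsec x).aestronglyMeasurable
      (Filter.Eventually.of_forall fun y => by rw [Real.norm_eq_abs]; exact hbdd x y)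
  -- Facts about T₁ = inner integral of So.
  have T₁fact : ∀ s : ℝ, 0 < s →
      Integrable (fun x => ∫ y, So (Function.uncurry g) s (x, y) ∂F) F ∧
      (∫ x, (∫ y, So (Function.uncurry g) s (x, y) ∂F) ∂F) = ψ s ∧
      ∀ ε, 0 < ε → ε < s → ∀ (x x' : EuclideanSpace ℝ (Fin q)), dist x' x ≤ ε →
        |g₁ x' - g₁ x| ≤ ∫ y, So (Function.uncurry g) s (x, y) ∂F := by
    intro s hs
    have hint : Integrable (So (Function.uncurry g) s) (F.prod F) :=
      integrable_So hG hB hB0 _ s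
    refine ⟨hint.integral_prod_left, ?_, ?_⟩
    · rw [hψdef]
      exact integral_integral hint
    · intro ε hε hεs x x' hdist
      have h1 : g₁ x' - g₁ x = ∫ y, (g x' y - g x y) ∂F := by
        rw [hg₁, hg₁, integral_sub (hsecint x') (hsecint x)]
        ring
      have h2 : |∫ y, (g x' y - g x y) ∂F| ≤ ∫ y, |g x' y - g x y| ∂F := by
        simpa [Real.norm_eq_abs] using
          norm_integral_le_integral_norm (μ := F) (fun y => g x' y - g x y)
      rw [h1]
      refine h2.trans (integral_mono ?_ ?_ ?_)
      · exact ((hsecint x').sub (hsecint x)).abs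
      · refine Integrable.mono' (integrable_const (2 * B))
          (((measurable_So hG hB hs).comp measurable_prodMk_left).aestronglyMeasurable) ?_
        filter_upwards with y
        rw [Real.norm_eq_abs, abs_of_nonneg So_nonneg]
        exact So_le hB hB0
      · intro y
        have hwz : pairDist (x', y) (x, y) < s := by
          rw [pairDist_mk_left]
          linarith
        exact le_So hB hwz
  -- Part 2 (linear part).
  have part2 : ∀ ε : ℝ, 0 < ε → ε < ε₀ →
      ∫ x : EuclideanSpace ℝ (Fin q),
          (⨆ x' : {x' : EuclideanSpace ℝ (Fin q) // dist x' x ≤ ε}, |g₁ x' - g₁ x|) ∂F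
        ≤ L * ε := by
    intro ε hε hεε₀
    apply le_mul_of_forall_lt_aux hL.le hεε₀
    intro s hεs hsε₀
    obtain ⟨hTint, hTeq, hTbd⟩ := T₁fact s (hε.trans hεs)
    have hptwise : ∀ x, (⨆ x' : {x' : EuclideanSpace ℝ (Fin q) // dist x' x ≤ ε},
        |g₁ x' - g₁ x|) ≤ ∫ y, So (Function.uncurry g) s (x, y) ∂F := by
      intro x
      refine Real.iSup_le (fun x' => hTbd ε hε hεs x x' x'.2) ?_
      exact integral_nonneg fun y => So_nonneg
    calc ∫ x, (⨆ x' : {x' : EuclideanSpace ℝ (Fin q) // dist x' x ≤ ε},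
          |g₁ x' - g₁ x|) ∂F
        ≤ ∫ x, (∫ y, So (Function.uncurry g) s (x, y) ∂F) ∂F :=
          integral_mono_of_nonneg
            (Filter.Eventually.of_forall fun x => Real.iSup_nonneg fun x' => abs_nonneg _)
            hTint (Filter.Eventually.of_forall hptwise)
    _ = ψ s := hTeq
    _ ≤ L * s := hψle s (hε.trans hεs) hsε₀
  -- Part 1 (degenerate part).
  have part1 : ∀ ε : ℝ, 0 < ε → ε < ε₀ →
      ∫ z : EuclideanSpace ℝ (Fin q) × EuclideanSpace ℝ (Fin q),
          (⨆ w : {w : EuclideanSpace ℝ (Fin q) × EuclideanSpace ℝ (Fin q) //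
              pairDist w z ≤ ε},
            |g₂ w.1.1 w.1.2 - g₂ z.1 z.2|) ∂(F.prod F)
        ≤ 3 * L * ε := by
    intro ε hε hεε₀
    have h3L : (0 : ℝ) ≤ 3 * L := by linarith
    have hstep : ∀ s, ε < s → s < ε₀ →
        ∫ z : EuclideanSpace ℝ (Fin q) × EuclideanSpace ℝ (Fin q),
            (⨆ w : {w : EuclideanSpace ℝ (Fin q) × EuclideanSpace ℝ (Fin q) //
                pairDist w z ≤ ε},
              |g₂ w.1.1 w.1.2 - g₂ z.1 z.2|) ∂(F.prod F)
          ≤ (3 * L) * s := by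
      intro s hεs hsε₀
      obtain ⟨hTint, hTeq, hTbd⟩ := T₁fact s (hε.trans hεs)
      set T₁ : EuclideanSpace ℝ (Fin q) → ℝ :=
        fun x => ∫ y, So (Function.uncurry g) s (x, y) ∂F with hT₁def
      have hT₁nonneg : ∀ x, 0 ≤ T₁ x := fun x => integral_nonneg fun y => So_nonneg
      have hμfst : (F.prod F).map Prod.fst = F := by
        rw [Measure.map_fst_prod]; simp
      have hμsnd : (F.prod F).map Prod.snd = F := by
        rw [Measure.map_snd_prod]; simp
      have hT₁m_fst : AEStronglyMeasurable T₁ ((F.prod F).map Prod.fst) := by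
        rw [hμfst]; exact hTint.aestronglyMeasurable
      have hT₁m_snd : AEStronglyMeasurable T₁ ((F.prod F).map Prod.snd) := by
        rw [hμsnd]; exact hTint.aestronglyMeasurable
      have hfst_int : Integrable (fun z : EuclideanSpace ℝ (Fin q) ×
          EuclideanSpace ℝ (Fin q) => T₁ z.1) (F.prod F) := by
        have h := (integrable_map_measure hT₁m_fst measurable_fst.aemeasurable).mp
          (by rw [hμfst]; exact hTint)
        exact h
      have hsnd_int : Integrable (fun z : EuclideanSpace ℝ (Fin q) ×
          EuclideanSpace ℝ (Fin q) => T₁ z.2) (F.prod F) := by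
        have h := (integrable_map_measure hT₁m_snd measurable_snd.aemeasurable).mp
          (by rw [hμsnd]; exact hTint)
        exact h
      have hfst_eq : ∫ z : EuclideanSpace ℝ (Fin q) × EuclideanSpace ℝ (Fin q),
          T₁ z.1 ∂(F.prod F) = ψ s := by
        calc ∫ z : EuclideanSpace ℝ (Fin q) × EuclideanSpace ℝ (Fin q),
            T₁ z.1 ∂(F.prod F)
            = ∫ x, T₁ x ∂((F.prod F).map Prod.fst) :=
              (integral_map measurable_fst.aemeasurable hT₁m_fst).symm
        _ = ∫ x, T₁ x ∂F := by rw [hμfst]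
        _ = ψ s := hTeq
      have hsnd_eq : ∫ z : EuclideanSpace ℝ (Fin q) × EuclideanSpace ℝ (Fin q),
          T₁ z.2 ∂(F.prod F) = ψ s := by
        calc ∫ z : EuclideanSpace ℝ (Fin q) × EuclideanSpace ℝ (Fin q),
            T₁ z.2 ∂(F.prod F)
            = ∫ x, T₁ x ∂((F.prod F).map Prod.snd) :=
              (integral_map measurable_snd.aemeasurable hT₁m_snd).symm
        _ = ∫ x, T₁ x ∂F := by rw [hμsnd]
        _ = ψ s := hTeq
      have hSint : Integrable (So (Function.uncurry g) s) (F.prod F) :=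
        integrable_So hG hB hB0 _ s
      have hh_int : Integrable
          (fun z : EuclideanSpace ℝ (Fin q) × EuclideanSpace ℝ (Fin q) =>
            So (Function.uncurry g) s z + (T₁ z.1 + T₁ z.2)) (F.prod F) :=
        hSint.add (hfst_int.add hsnd_int)
      have hh_eq : ∫ z : EuclideanSpace ℝ (Fin q) × EuclideanSpace ℝ (Fin q),
          (So (Function.uncurry g) s z + (T₁ z.1 + T₁ z.2)) ∂(F.prod F)
          = ψ s + (ψ s + ψ s) := by
        have hfst_int' : Integrable (fun z : EuclideanSpace ℝ (Fin q) ×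
            EuclideanSpace ℝ (Fin q) => T₁ z.1 + T₁ z.2) (F.prod F) := by
          have h := hfst_int.add hsnd_int
          exact h
        calc ∫ z : EuclideanSpace ℝ (Fin q) × EuclideanSpace ℝ (Fin q),
            (So (Function.uncurry g) s z + (T₁ z.1 + T₁ z.2)) ∂(F.prod F)
            = (∫ z : EuclideanSpace ℝ (Fin q) × EuclideanSpace ℝ (Fin q),
                So (Function.uncurry g) s z ∂(F.prod F))
              + ∫ z : EuclideanSpace ℝ (Fin q) × EuclideanSpace ℝ (Fin q),
                (T₁ z.1 + T₁ z.2) ∂(F.prod F) := integral_add hSint hfst_int'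
        _ = (∫ z : EuclideanSpace ℝ (Fin q) × EuclideanSpace ℝ (Fin q),
                So (Function.uncurry g) s z ∂(F.prod F))
              + ((∫ z : EuclideanSpace ℝ (Fin q) × EuclideanSpace ℝ (Fin q),
                  T₁ z.1 ∂(F.prod F))
                + ∫ z : EuclideanSpace ℝ (Fin q) × EuclideanSpace ℝ (Fin q),
                  T₁ z.2 ∂(F.prod F)) := by
              exact congrArg (fun t => (∫ z : EuclideanSpace ℝ (Fin q) ×
                EuclideanSpace ℝ (Fin q), So (Function.uncurry g) s z ∂(F.prod F)) + t)
                (integral_add hfst_int hsnd_int)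
        _ = ψ s + (ψ s + ψ s) := by
              rw [hfst_eq, hsnd_eq]
      have hpt : ∀ z : EuclideanSpace ℝ (Fin q) × EuclideanSpace ℝ (Fin q),
          (⨆ w : {w : EuclideanSpace ℝ (Fin q) × EuclideanSpace ℝ (Fin q) //
              pairDist w z ≤ ε}, |g₂ w.1.1 w.1.2 - g₂ z.1 z.2|)
            ≤ So (Function.uncurry g) s z + (T₁ z.1 + T₁ z.2) := by
        intro z
        refine Real.iSup_le (fun w => ?_)
          (add_nonneg So_nonneg (add_nonneg (hT₁nonneg _) (hT₁nonneg _)))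
        have e1 : g₂ w.1.1 w.1.2 - g₂ z.1 z.2 =
            (g w.1.1 w.1.2 - g z.1 z.2) - (g₁ w.1.1 - g₁ z.1) - (g₁ w.1.2 - g₁ z.2) := by
          rw [hg₂, hg₂]
          ring
        have h1 : |g w.1.1 w.1.2 - g z.1 z.2| ≤ So (Function.uncurry g) s z :=
          le_So hB (lt_of_le_of_lt w.2 hεs)
        have h2 : |g₁ w.1.1 - g₁ z.1| ≤ T₁ z.1 :=
          hTbd ε hε hεs z.1 w.1.1 ((dist_fst_le_pairDist w.1 z).trans w.2)
        have h3 : |g₁ w.1.2 - g₁ z.2| ≤ T₁ z.2 :=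
          hTbd ε hε hεs z.2 w.1.2 ((dist_snd_le_pairDist w.1 z).trans w.2)
        calc |g₂ w.1.1 w.1.2 - g₂ z.1 z.2|
            = |(g w.1.1 w.1.2 - g z.1 z.2) - (g₁ w.1.1 - g₁ z.1) - (g₁ w.1.2 - g₁ z.2)| := by
              rw [e1]
        _ ≤ |(g w.1.1 w.1.2 - g z.1 z.2) - (g₁ w.1.1 - g₁ z.1)| + |g₁ w.1.2 - g₁ z.2| :=
              abs_sub _ _
        _ ≤ (|g w.1.1 w.1.2 - g z.1 z.2| + |g₁ w.1.1 - g₁ z.1|) + |g₁ w.1.2 - g₁ z.2| :=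
              add_le_add_left (abs_sub _ _) _
        _ ≤ (So (Function.uncurry g) s z + T₁ z.1) + T₁ z.2 :=
              add_le_add (add_le_add h1 h2) h3
        _ = So (Function.uncurry g) s z + (T₁ z.1 + T₁ z.2) := by ring
      have hψs := hψle s (hε.trans hεs) hsε₀
      calc ∫ z : EuclideanSpace ℝ (Fin q) × EuclideanSpace ℝ (Fin q),
          (⨆ w : {w : EuclideanSpace ℝ (Fin q) × EuclideanSpace ℝ (Fin q) //
              pairDist w z ≤ ε},
            |g₂ w.1.1 w.1.2 - g₂ z.1 z.2|) ∂(F.prod F)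
          ≤ ∫ z : EuclideanSpace ℝ (Fin q) × EuclideanSpace ℝ (Fin q),
            (So (Function.uncurry g) s z + (T₁ z.1 + T₁ z.2)) ∂(F.prod F) :=
            integral_mono_of_nonneg
              (Filter.Eventually.of_forall fun z => Real.iSup_nonneg fun w => abs_nonneg _)
              hh_int (Filter.Eventually.of_forall hpt)
      _ = ψ s + (ψ s + ψ s) := hh_eq
      _ ≤ L * s + (L * s + L * s) := by linarith
      _ = (3 * L) * s := by ring
    have := le_mul_of_forall_lt_aux h3L hεε₀ hstep
    linarith
  exact ⟨part1, part2⟩
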